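/- Let C be a triangulated category endowed with a weight structure w, let M, M' ∈ C_{w≥0}, and let f : M → M'. Suppose given positive weight Postnikov towers for M and M' (towers (Y_i)_{i≥0} and (Y'_i)_{i≥0} with Y_i ∈ C_{w≤i}, Y'_i ∈ C_{w≤i}, morphisms Y_{i−1} → Y_i and Y_i → M compatible in the obvious sense, with Cone(Y_i → M) ∈ C_{w≥i+1}, and likewise for M', where Y_{−1} = Y'_{−1} = 0), and suppose f extends to a morphism of these towers (a compatible family f_i : Y_i → Y'_i) such that f_0 : Y_0 → Y'_0 is an isomorphism. If moreover M' ∈ C_{w=0}, then M' is a retract of M via f: there exists s : M' → M with f ∘ s = id_{M'}. -/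

import Mathlib

open CategoryTheory CategoryTheory.Limits CategoryTheory.Pretriangulated CategoryTheory.Category
open scoped ZeroObject

universe w v u

/-- `X` is a retract of `Y`: the identity of `X` factors through `Y`. -/
def IsRetract {D : Type*} [Category D] (X Y : D) : Prop :=
  ∃ (i : X ⟶ Y) (r : Y ⟶ X), i ≫ r = 𝟙 X

/-- A weight structure on a triangulated category `C`. -/
structure WeightStructure (C : Type u) [Category.{v} C] [Preadditive C] [HasZeroObject C]
    [HasShift C ℤ] [∀ n : ℤ, (shiftFunctor C n).Additive] [Pretriangulated C] where
  /-- the class `C_{w≤0}` -/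
  LE : Set C
  /-- the class `C_{w≥0}` -/
  GE : Set C
  le_retract : ∀ ⦃X Y : C⦄, IsRetract X Y → Y ∈ LE → X ∈ LE
  ge_retract : ∀ ⦃X Y : C⦄, IsRetract X Y → Y ∈ GE → X ∈ GE
  le_shift : ∀ X : C, X ∈ LE → X⟦(-1 : ℤ)⟧ ∈ LE
  ge_shift : ∀ X : C, X ∈ GE → X⟦(1 : ℤ)⟧ ∈ GE
  orthogonal : ∀ ⦃X Y : C⦄, X ∈ LE → Y ∈ GE → ∀ f : X ⟶ Y⟦(1 : ℤ)⟧, f = 0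
  exists_decomp : ∀ M : C, ∃ (B A : C) (f : B ⟶ M) (g : M ⟶ A) (h : A ⟶ B⟦(1 : ℤ)⟧),
    B ∈ LE ∧ A⟦(-1 : ℤ)⟧ ∈ GE ∧ Triangle.mk f g h ∈ distTriang C

namespace WeightStructure

variable {C : Type u} [Category.{v} C] [Preadditive C] [HasZeroObject C]
  [HasShift C ℤ] [∀ n : ℤ, (shiftFunctor C n).Additive] [Pretriangulated C]

/-- the class `C_{w≤i} = C_{w≤0}[i]` -/
def leSet (w : WeightStructure C) (i : ℤ) : Set C := {X : C | X⟦-i⟧ ∈ w.LE}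

/-- the class `C_{w≥i} = C_{w≥0}[i]` -/
def geSet (w : WeightStructure C) (i : ℤ) : Set C := {X : C | X⟦-i⟧ ∈ w.GE}

/-- the class `C_{w=i} = C_{w≤i} ∩ C_{w≥i}` -/
def eqSet (w : WeightStructure C) (i : ℤ) : Set C := w.leSet i ∩ w.geSet i

end WeightStructure

variable {C : Type u} [Category.{v} C] [Preadditive C] [HasZeroObject C]
  [HasShift C ℤ] [∀ n : ℤ, (shiftFunctor C n).Additive] [Pretriangulated C]

/-- Proposition 2.1.3(11): if `f : M ⟶ M'` (with `M, M' ∈ C_{w≥0}`) extends to a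
morphism of positive weight Postnikov towers inducing an isomorphism on the zeroth
terms, and `M' ∈ C_{w=0}`, then `M'` is a retract of `M` via `f`. -/
theorem retract_of_morphism_of_positive_towers (w : WeightStructure C)
    (M M' : C) (hM : M ∈ w.geSet 0) (hM' : M' ∈ w.geSet 0) (f : M ⟶ M')
    (Y Y' : ℕ → C)
    (φ : ∀ i : ℕ, Y i ⟶ Y (i + 1)) (φ' : ∀ i : ℕ, Y' i ⟶ Y' (i + 1))
    (π : ∀ i : ℕ, Y i ⟶ M) (π' : ∀ i : ℕ, Y' i ⟶ M')
    (hπ : ∀ i : ℕ, φ i ≫ π (i + 1) = π i) (hπ' : ∀ i : ℕ, φ' i ≫ π' (i + 1) = π' i)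
    (hY : ∀ i : ℕ, Y i ∈ w.leSet i) (hY' : ∀ i : ℕ, Y' i ∈ w.leSet i)
    (hcone : ∀ i : ℕ, ∀ (Z : C) (u : M ⟶ Z) (v : Z ⟶ (Y i)⟦(1 : ℤ)⟧),
      Triangle.mk (π i) u v ∈ (distTriang C) → Z ∈ w.geSet ((i : ℤ) + 1))
    (hcone' : ∀ i : ℕ, ∀ (Z : C) (u : M' ⟶ Z) (v : Z ⟶ (Y' i)⟦(1 : ℤ)⟧),
      Triangle.mk (π' i) u v ∈ (distTriang C) → Z ∈ w.geSet ((i : ℤ) + 1))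
    (fi : ∀ i : ℕ, Y i ⟶ Y' i)
    (hfi : ∀ i : ℕ, φ i ≫ fi (i + 1) = fi i ≫ φ' i)
    (hfiM : ∀ i : ℕ, fi i ≫ π' i = π i ≫ f)
    (hf0 : IsIso (fi 0))
    (hM'heart : M' ∈ w.eqSet 0) :
    ∃ s : M' ⟶ M, s ≫ f = 𝟙 M' := by

  -- Complete `π' 0 : Y' 0 ⟶ M'` into a distinguished triangle with cone `Z`.
  obtain ⟨Z, u, v, hT⟩ := Pretriangulated.distinguished_cocone_triangle (π' 0)
  have hZ : Z ∈ w.geSet ((0 : ℤ) + 1) := hcone' 0 Z u v hT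
  have hZGE : Z⟦(-1 : ℤ)⟧ ∈ w.GE := by
    simpa [WeightStructure.geSet] using hZ
  -- `M' ∈ C_{w≤0}` hence `M' ∈ LE` (up to the shift-by-zero iso).
  have hM'LE : M' ∈ w.LE := by
    have h0 : M'⟦(-0 : ℤ)⟧ ∈ w.LE := hM'heart.1
    rw [neg_zero] at h0
    exact w.le_retract ⟨(shiftFunctorZero C ℤ).inv.app M',
      (shiftFunctorZero C ℤ).hom.app M', by simp⟩ h0
  -- any map `M' ⟶ Z` is zero
  have hZero : ∀ g : M' ⟶ Z, g = 0 := by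
    intro g
    have e : Z ≅ (Z⟦(-1 : ℤ)⟧)⟦(1 : ℤ)⟧ :=
      ((shiftFunctorCompIsoId C (-1 : ℤ) (1 : ℤ) (by ring)).symm.app Z)
    have h := w.orthogonal hM'LE hZGE (g ≫ e.hom)
    calc g = (g ≫ e.hom) ≫ e.inv := by simp
    _ = 0 := by rw [h]; simp
  -- hence the identity of `M'` factors through `π' 0`
  obtain ⟨t, ht⟩ := Pretriangulated.Triangle.coyoneda_exact₂ _ hT (𝟙 M')
    (by exact (Category.id_comp u).trans (hZero u))
  haveI := hf0
  refine ⟨t ≫ @inv C _ (Y 0) (Y' 0) (fi 0) hf0 ≫ π 0, ?_⟩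
  have : inv (fi 0) ≫ π 0 ≫ f = π' 0 := by
    rw [← hfiM 0, ← assoc, IsIso.inv_hom_id, id_comp]
  simp only [assoc]
  exact (congrArg (t ≫ ·) ((assoc _ _ _).trans this)).trans ht.symm
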